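/- With the notation of the attitude error dynamics, ė_R = C(Rc^T R) e_Ω, where C(Q) = (1/2)(tr(Q^T) I - Q^T) for Q = Rc^T R, i.e., ė_R = (1/2)(tr(R^T Rc) I - R^T Rc) e_Ω. -/

import Mathlib

open Matrix
open scoped Matrix

attribute [local instance] Matrix.normedAddCommGroup Matrix.normedSpace

/-- The hat map sending `x ∈ ℝ³` to the skew-symmetric matrix `x̂` with `x̂ y = x × y`. -/
def hat (x : Fin 3 → ℝ) : Matrix (Fin 3) (Fin 3) ℝ :=
  !![0, -x 2, x 1; x 2, 0, -x 0; -x 1, x 0, 0]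

/-- The vee map, inverse of the hat map. -/
def vee (M : Matrix (Fin 3) (Fin 3) ℝ) : Fin 3 → ℝ := ![M 2 1, M 0 2, M 1 0]

section Aux

/-- `vee` as a linear map. -/
noncomputable def veeL : Matrix (Fin 3) (Fin 3) ℝ →ₗ[ℝ] (Fin 3 → ℝ) where
  toFun := vee
  map_add' M N := by funext i; fin_cases i <;> simp [vee]
  map_smul' c M := by funext i; fin_cases i <;> simp [vee]

lemma vee_sub (M N : Matrix (Fin 3) (Fin 3) ℝ) : vee (M - N) = vee M - vee N := by
  funext i; fin_cases i <;> simp [vee]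

lemma hat_transpose (x : Fin 3 → ℝ) : (hat x)ᵀ = -hat x := by
  ext i j; fin_cases i <;> fin_cases j <;> simp [hat]

/-- Universal identity: `vee (A x̂ + x̂ Aᵀ) = (tr A • 1 - Aᵀ) x`. -/
lemma vee_conj (A : Matrix (Fin 3) (Fin 3) ℝ) (x : Fin 3 → ℝ) :
    vee (A * hat x + hat x * Aᵀ)
      = (A.trace • (1 : Matrix (Fin 3) (Fin 3) ℝ) - Aᵀ).mulVec x := by
  funext i
  fin_cases i <;>
    simp [vee, hat, Matrix.mul_apply, Matrix.mulVec, Matrix.vecMul, dotProduct,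
      Fin.sum_univ_three, Matrix.trace, Matrix.diag, Matrix.one_apply] <;> ring

/-- Cayley–Hamilton style universal identity for 3×3 matrices. -/
lemma cayley3 (A : Matrix (Fin 3) (Fin 3) ℝ) :
    A * A - A.trace • A + (A.adjugate).trace • (1 : Matrix (Fin 3) (Fin 3) ℝ)
      = A.adjugate := by
  ext i j
  fin_cases i <;> fin_cases j <;>
    simp [Matrix.mul_apply, Fin.sum_univ_three, Matrix.trace, Matrix.diag,
      Matrix.adjugate_fin_three, Matrix.one_apply] <;> ring

lemma SO3_key {Q : Matrix (Fin 3) (Fin 3) ℝ} (hQ : Qᵀ * Q = 1) (hdet : Q.det = 1) :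
    (Q.trace • (1 : Matrix (Fin 3) (Fin 3) ℝ) - Qᵀ) * Qᵀ
      = Q.trace • (1 : Matrix (Fin 3) (Fin 3) ℝ) - Q := by
  have hinv : Q * Qᵀ = 1 := mul_eq_one_comm.mp hQ
  have hadj : Q.adjugate = Qᵀ := by
    calc Q.adjugate = Q.adjugate * (Q * Qᵀ) := by rw [hinv, mul_one]
    _ = (Q.adjugate * Q) * Qᵀ := by rw [mul_assoc]
    _ = Qᵀ := by rw [Matrix.adjugate_mul, hdet, one_smul, one_mul]
  have E := cayley3 Q
  rw [hadj, Matrix.trace_transpose] at E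
  have E2 : Q.trace • (1 : Matrix (Fin 3) (Fin 3) ℝ) - Qᵀ = Q.trace • Q - Q * Q := by
    rw [← E]; abel
  rw [E2, sub_mul, smul_mul_assoc, hinv, mul_assoc, hinv, mul_one]

/-- The key algebraic identity behind the attitude error dynamics. -/
lemma final_alg {Q : Matrix (Fin 3) (Fin 3) ℝ} (hQ : Qᵀ * Q = 1) (hdet : Q.det = 1)
    (ω ωc : Fin 3 → ℝ) :
    ((1 / 2 : ℝ) • (Qᵀ.trace • (1 : Matrix (Fin 3) (Fin 3) ℝ) - Qᵀ)).mulVec (ω - Qᵀ.mulVec ωc)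
      = (1 / 2 : ℝ) • vee (Q * hat ω + hat ω * Qᵀ - (Qᵀ * hat ωc + hat ωc * Q)) := by
  have h2 : Qᵀ * hat ωc + hat ωc * Q = Qᵀ * hat ωc + hat ωc * (Qᵀ)ᵀ := by
    rw [Matrix.transpose_transpose]
  rw [h2, vee_sub, vee_conj, vee_conj, Matrix.transpose_transpose,
    Matrix.smul_mulVec, Matrix.mulVec_sub, Matrix.mulVec_mulVec,
    Matrix.trace_transpose, SO3_key hQ hdet]

/-- Entrywise characterization of matrix-valued derivatives. -/
lemma hasDerivAt_matrix {A : ℝ → Matrix (Fin 3) (Fin 3) ℝ} {A' : Matrix (Fin 3) (Fin 3) ℝ}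
    {t : ℝ} : HasDerivAt A A' t ↔ ∀ i j, HasDerivAt (fun s => A s i j) (A' i j) t := by
  constructor
  · intro h i j
    exact (hasDerivAt_pi.mp ((hasDerivAt_pi (φ' := A')).mp h i)) j
  · intro h
    exact hasDerivAt_pi.mpr fun i => hasDerivAt_pi.mpr fun j => h i j

/-- Product rule for matrix-valued functions. -/
lemma HasDerivAt.matrix_mul {A B : ℝ → Matrix (Fin 3) (Fin 3) ℝ}
    {A' B' : Matrix (Fin 3) (Fin 3) ℝ} {t : ℝ}
    (hA : HasDerivAt A A' t) (hB : HasDerivAt B B' t) :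
    HasDerivAt (fun s => A s * B s) (A' * B t + A t * B') t := by
  rw [hasDerivAt_matrix] at hA hB ⊢
  intro i j
  have h : HasDerivAt (fun s => ∑ k, A s i k * B s k j)
      (∑ k : Fin 3, (A' i k * B t k j + A t i k * B' k j)) t :=
    HasDerivAt.fun_sum fun k _ => (hA i k).mul (hB k j)
  have heq : (fun s => (A s * B s) i j) = fun s => ∑ k, A s i k * B s k j := by
    funext s; simp [Matrix.mul_apply]
  rw [heq]
  convert h using 1
  simp [Matrix.add_apply, Matrix.mul_apply, Finset.sum_add_distrib]

lemma HasDerivAt.matrix_transpose {A : ℝ → Matrix (Fin 3) (Fin 3) ℝ}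
    {A' : Matrix (Fin 3) (Fin 3) ℝ} {t : ℝ} (hA : HasDerivAt A A' t) :
    HasDerivAt (fun s => (A s)ᵀ) A'ᵀ t := by
  rw [hasDerivAt_matrix] at hA ⊢
  intro i j
  exact hA j i

end Aux

/-- Attitude error dynamics: `ė_R = C(RcᵀR) e_Ω` with
`C(Q) = (1/2)(tr(Qᵀ) I - Qᵀ)`, i.e. `ė_R = (1/2)(tr(RᵀRc) I - RᵀRc) e_Ω`. -/
theorem stmt5 (R Rc : ℝ → Matrix (Fin 3) (Fin 3) ℝ) (Ω Ωc : ℝ → Fin 3 → ℝ) (t : ℝ)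
    (hSO : ∀ s, (R s)ᵀ * R s = 1 ∧ (R s).det = 1)
    (hSOc : ∀ s, (Rc s)ᵀ * Rc s = 1 ∧ (Rc s).det = 1)
    (hR : ∀ s, HasDerivAt R (R s * hat (Ω s)) s)
    (hRc : ∀ s, HasDerivAt Rc (Rc s * hat (Ωc s)) s) :
    let eΩ : Fin 3 → ℝ := Ω t - ((R t)ᵀ * Rc t).mulVec (Ωc t)
    let C : Matrix (Fin 3) (Fin 3) ℝ :=
      (1 / 2 : ℝ) • (((R t)ᵀ * Rc t).trace • (1 : Matrix (Fin 3) (Fin 3) ℝ) - (R t)ᵀ * Rc t)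
    HasDerivAt (fun s => (1 / 2 : ℝ) • vee ((Rc s)ᵀ * R s - (R s)ᵀ * Rc s))
      (C.mulVec eΩ) t := by
  intro eΩ C
  obtain ⟨Q, hQdef⟩ : ∃ Q, Q = (Rc t)ᵀ * R t := ⟨_, rfl⟩
  have hQt : (R t)ᵀ * Rc t = Qᵀ := by
    rw [hQdef, Matrix.transpose_mul, Matrix.transpose_transpose]
  -- orthogonality and determinant facts for Q
  have hRcRcT : Rc t * (Rc t)ᵀ = 1 := mul_eq_one_comm.mp (hSOc t).1
  have hQorth : Qᵀ * Q = 1 := by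
    rw [← hQt, hQdef, mul_assoc, ← mul_assoc (Rc t), hRcRcT, one_mul, (hSO t).1]
  have hQdet : Q.det = 1 := by
    rw [hQdef, Matrix.det_mul, Matrix.det_transpose, (hSOc t).2, (hSO t).2, one_mul]
  -- the derivative of the matrix-valued function
  have hG : HasDerivAt (fun s => (Rc s)ᵀ * R s - (R s)ᵀ * Rc s)
      ((Rc t * hat (Ωc t))ᵀ * R t + (Rc t)ᵀ * (R t * hat (Ω t)) -
        ((R t * hat (Ω t))ᵀ * Rc t + (R t)ᵀ * (Rc t * hat (Ωc t)))) t :=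
    (((hRc t).matrix_transpose).matrix_mul (hR t)).sub
      (((hR t).matrix_transpose).matrix_mul (hRc t))
  -- rewrite the derivative in terms of Q
  have hD : (Rc t * hat (Ωc t))ᵀ * R t + (Rc t)ᵀ * (R t * hat (Ω t)) -
        ((R t * hat (Ω t))ᵀ * Rc t + (R t)ᵀ * (Rc t * hat (Ωc t)))
      = Q * hat (Ω t) + hat (Ω t) * Qᵀ - (Qᵀ * hat (Ωc t) + hat (Ωc t) * Q) := by
    rw [← hQt, hQdef]
    simp only [Matrix.transpose_mul, hat_transpose, Matrix.transpose_transpose,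
      Matrix.neg_mul, Matrix.mul_neg, mul_assoc]
    abel
  rw [hD] at hG
  -- compose with the linear map `vee` and scalar multiplication
  have hLv : HasDerivAt (fun s => vee ((Rc s)ᵀ * R s - (R s)ᵀ * Rc s))
      (vee (Q * hat (Ω t) + hat (Ω t) * Qᵀ - (Qᵀ * hat (Ωc t) + hat (Ωc t) * Q))) t := by
    have := (LinearMap.toContinuousLinearMap veeL).hasFDerivAt.comp_hasDerivAt t hG
    exact this
  have hF : HasDerivAt (fun s => (1 / 2 : ℝ) • vee ((Rc s)ᵀ * R s - (R s)ᵀ * Rc s))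
      ((1 / 2 : ℝ) • vee (Q * hat (Ω t) + hat (Ω t) * Qᵀ - (Qᵀ * hat (Ωc t) + hat (Ωc t) * Q))) t :=
    hLv.const_smul (1 / 2 : ℝ)
  convert hF using 1
  -- the algebraic identity
  show C.mulVec eΩ = _
  simp only [C, eΩ, hQt]
  exact final_alg hQorth hQdet (Ω t) (Ωc t)
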